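/- The Sorgenfrey line is Lindelöf, but the product of the Sorgenfrey line with itself is not Lindelöf. -/

import Mathlib

/-- The Sorgenfrey topology on ℝ, generated by half-open intervals [a, b). -/
def sorgenfreyTopology : TopologicalSpace ℝ :=
  TopologicalSpace.generateFrom {s : Set ℝ | ∃ a b : ℝ, s = Set.Ico a b}

noncomputable section SLAux

open Set Filter TopologicalSpace Topology

/-- Type synonym for the Sorgenfrey line. -/
def SL : Type := ℝ

instance : ConditionallyCompleteLinearOrder SL :=
  inferInstanceAs (ConditionallyCompleteLinearOrder ℝ)

instance : Field SL := inferInstanceAs (Field ℝ)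

instance : IsStrictOrderedRing SL := inferInstanceAs (IsStrictOrderedRing ℝ)

instance : Archimedean SL := inferInstanceAs (Archimedean ℝ)

instance : DenselyOrdered SL := inferInstanceAs (DenselyOrdered ℝ)

instance : NoMaxOrder SL := inferInstanceAs (NoMaxOrder ℝ)

namespace SL

/-- Ring homomorphism between the Sorgenfrey line and the standard real line. -/
def toReal : SL ≃+* ℝ :=
  RingEquiv.refl ℝ

instance : TopologicalSpace SL :=
  TopologicalSpace.generateFrom {s : Set SL | ∃ a b : SL, s = Set.Ico a b}

theorem isOpen_Ico (a b : SL) : IsOpen (Ico a b) :=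
  TopologicalSpace.GenerateOpen.basic _ ⟨a, b, rfl⟩

theorem isOpen_Ici (a : SL) : IsOpen (Ici a) :=
  iUnion_Ico_right a ▸ isOpen_iUnion (isOpen_Ico a)

theorem nhds_basis_Ico (a : SL) : (𝓝 a).HasBasis (a < ·) (Ico a ·) := by
  rw [TopologicalSpace.nhds_generateFrom]
  haveI : Nonempty { x // x ≤ a } := Set.nonempty_Iic_subtype
  have : (⨅ x : { i // i ≤ a }, 𝓟 (Ici (x : SL))) = 𝓟 (Ici a) := by
    refine (IsLeast.isGLB ?_).iInf_eq
    exact ⟨⟨⟨a, le_rfl⟩, rfl⟩, forall_mem_range.2 fun b => principal_mono.2 <| Ici_subset_Ici.2 b.2⟩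
  simp only [mem_setOf_eq, iInf_and, iInf_exists, @iInf_comm _ (_ ∈ _), @iInf_comm _ (Set SL),
    iInf_iInf_eq_left, mem_Ico]
  have heq : (⨅ j : SL, ⨅ j_1 : SL, ⨅ (_ : j ≤ a), ⨅ (_ : a < j_1), 𝓟 (Ico j j_1))
      = ⨅ b ∈ Ioi a, 𝓟 (Ico a b) := by
    refine le_antisymm (le_iInf₂ fun b hb => ?_) ?_
    · exact iInf_le_of_le a <| iInf_le_of_le b <| iInf_le_of_le le_rfl <| iInf_le_of_le hb le_rfl
    · refine le_iInf fun j => le_iInf fun j1 => le_iInf fun hj => le_iInf fun hj1 => ?_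
      exact iInf₂_le_of_le j1 hj1 (principal_mono.2 (Ico_subset_Ico hj le_rfl))
  rw [heq]
  refine hasBasis_biInf_principal ?_ nonempty_Ioi
  intro b hb c hc
  exact ⟨min b c, mem_Ioi.2 (lt_min hb hc), Ico_subset_Ico le_rfl (min_le_left _ _),
    Ico_subset_Ico le_rfl (min_le_right _ _)⟩

theorem isOpen_iff {s : Set SL} : IsOpen s ↔ ∀ x ∈ s, ∃ y > x, Ico x y ⊆ s :=
  isOpen_iff_mem_nhds.trans <| forall₂_congr fun x _ => (nhds_basis_Ico x).mem_iff

@[simp]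
theorem map_toReal_nhds (a : SL) : map toReal (𝓝 a) = 𝓝[≥] toReal a := by
  refine ((nhds_basis_Ico a).map _).eq_of_same_basis ?_
  simp only [toReal.image_eq_preimage_symm]; exact nhdsGE_basis_Ico (toReal a)

theorem nhds_eq_map (a : SL) : 𝓝 a = map toReal.symm (𝓝[≥] (toReal a)) := by
  simp_rw [← map_toReal_nhds, map_map, Function.comp_def, toReal.symm_apply_apply, map_id']

theorem nhds_eq_comap (a : SL) : 𝓝 a = comap toReal (𝓝[≥] (toReal a)) := by
  rw [← map_toReal_nhds, comap_map toReal.injective]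

theorem continuous_toReal : Continuous toReal :=
  continuous_iff_continuousAt.2 fun x => by
    rw [ContinuousAt, Tendsto, map_toReal_nhds]
    exact inf_le_left

instance : OrderClosedTopology SL :=
  ⟨isClosed_le_prod.preimage (continuous_toReal.prodMap continuous_toReal)⟩

instance : ContinuousAdd SL := by
  refine ⟨continuous_iff_continuousAt.2 ?_⟩
  rintro ⟨x, y⟩
  rw [ContinuousAt, nhds_prod_eq, nhds_eq_comap (x + y), tendsto_comap_iff,
    nhds_eq_map, nhds_eq_map, prod_map_map_eq, ← nhdsWithin_prod_eq, Ici_prod_Ici]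
  exact (continuous_add.tendsto _).inf (MapsTo.tendsto fun x hx => add_le_add hx.1 hx.2)

theorem isClopen_Ici (a : SL) : IsClopen (Ici a) :=
  ⟨isClosed_Ici, isOpen_Ici a⟩

theorem isClopen_Ici_prod (x : SL × SL) : IsClopen (Ici x) :=
  (Ici_prod_eq x).symm ▸ (isClopen_Ici _).prod (isClopen_Ici _)

theorem isClosed_antidiagonal (c : SL) : IsClosed {x : SL × SL | x.1 + x.2 = c} :=
  isClosed_singleton.preimage continuous_add

theorem isClosed_of_subset_antidiagonal {s : Set (SL × SL)} {c : SL}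
    (hs : ∀ x ∈ s, x.1 + x.2 = c) : IsClosed s := by
  rw [← closure_subset_iff_isClosed]
  rintro ⟨x, y⟩ H
  obtain rfl : x + y = c := by
    change (x, y) ∈ {p : SL × SL | p.1 + p.2 = c}
    exact closure_minimal (hs : s ⊆ {x | x.1 + x.2 = c}) (isClosed_antidiagonal c) H
  rcases mem_closure_iff.1 H (Ici (x, y)) (isClopen_Ici_prod _).2 self_mem_Ici with
    ⟨⟨x', y'⟩, ⟨hx : x ≤ x', hy : y ≤ y'⟩, H⟩
  convert H
  · refine hx.antisymm ?_
    rwa [← add_le_add_iff_right, hs _ H, add_le_add_iff_left]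
  · refine hy.antisymm ?_
    rwa [← add_le_add_iff_left, hs _ H, add_le_add_iff_right]

open Subtype in
instance (c : SL) : DiscreteTopology {x : SL × SL | x.1 + x.2 = c} :=
  discreteTopology_iff_forall_isOpen.2 fun U ↦ isClosed_compl_iff.1 <| isClosed_induced_iff.2
    ⟨val '' Uᶜ, isClosed_of_subset_antidiagonal <| coe_image_subset _ Uᶜ,
      preimage_image_eq _ val_injective⟩

/-- The Sorgenfrey line is Lindelöf. -/
theorem lindelofSpace : LindelofSpace SL := by
  constructor
  apply isLindelof_of_countable_subcover
  intro ι U hUo hcov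
  -- choose for each point a half-open interval inside a cover element
  have key : ∀ x : SL, ∃ i : ι, ∃ y : SL, x < y ∧ Ico x y ⊆ U i := by
    intro x
    rcases mem_iUnion.1 (hcov (mem_univ x)) with ⟨i, hi⟩
    rcases (isOpen_iff.1 (hUo i)) x hi with ⟨y, hy, hsub⟩
    exact ⟨i, y, hy, hsub⟩
  choose i y hy hsub using key
  -- the union of open intervals, in the standard topology on ℝ
  obtain ⟨T, hTc, hTU⟩ :=
    TopologicalSpace.isOpen_iUnion_countable (fun x : ℝ => Ioo x (y x)) fun _ => isOpen_Ioo
  -- the complement of the union is countable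
  have hcompl : {x : ℝ | x ∉ ⋃ t : ℝ, Ioo t (y t)}.Countable := by
    choose q hq1 hq2 using fun x : ℝ => exists_rat_btwn (K := ℝ) ((hy x : (x : SL) < y x))
    have key : ∀ a ∈ {x : ℝ | x ∉ ⋃ t : ℝ, Ioo t (y t)},
        ∀ b ∈ {x : ℝ | x ∉ ⋃ t : ℝ, Ioo t (y t)}, a < b → (q a : ℝ) < q b := by
      intro a _ b hb hlt
      have hbya : (y a : ℝ) ≤ b := by
        by_contra h
        exact hb (mem_iUnion.2 ⟨a, hlt, not_le.1 h⟩)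
      exact lt_of_le_of_lt (le_trans (hq2 a).le hbya) (hq1 b)
    have hinj : Set.InjOn q {x : ℝ | x ∉ ⋃ t : ℝ, Ioo t (y t)} := by
      intro a ha b hb hab
      rcases lt_trichotomy a b with h | h | h
      · exact absurd (by exact_mod_cast hab : (q a : ℝ) = q b) (key a ha b hb h).ne
      · exact h
      · exact absurd (by exact_mod_cast hab : (q a : ℝ) = q b) (key b hb a ha h).ne'
    rw [Set.countable_iff_exists_injOn]
    exact ⟨fun x => Encodable.encode (q x),
      fun a ha b hb h => hinj ha hb (Encodable.encode_injective h)⟩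
  refine ⟨i '' (T ∪ {x : ℝ | x ∉ ⋃ t : ℝ, Ioo t (y t)}), (hTc.union hcompl).image i,
    fun z _ => ?_⟩
  by_cases hz : (z : ℝ) ∈ ⋃ t : ℝ, Ioo t (y t)
  · rw [← hTU] at hz
    rcases mem_iUnion₂.1 hz with ⟨x, hxT, hx1, hx2⟩
    exact mem_biUnion ⟨x, Or.inl hxT, rfl⟩ (hsub x ⟨le_of_lt hx1, hx2⟩)
  · exact mem_biUnion ⟨z, Or.inr hz, rfl⟩ (hsub z ⟨le_rfl, hy z⟩)

end SL
end SLAux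

/-- The Sorgenfrey line is Lindelöf, but its square is not Lindelöf. -/
theorem sorgenfrey_lindelof_square_not :
    @LindelofSpace ℝ sorgenfreyTopology ∧
      ¬ @LindelofSpace (ℝ × ℝ)
          (@instTopologicalSpaceProd ℝ ℝ sorgenfreyTopology sorgenfreyTopology) := by
  constructor
  · exact SL.lindelofSpace
  · intro h
    haveI : LindelofSpace (SL × SL) := h
    have hl : IsLindelof {x : SL × SL | x.1 + x.2 = 0} :=
      (SL.isClosed_antidiagonal 0).isLindelof
    have hcnt : {x : SL × SL | x.1 + x.2 = 0}.Countable := hl.countable inferInstance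
    have hrange : Set.range (fun x : ℝ => ((x, -x) : SL × SL)) ⊆ {x : SL × SL | x.1 + x.2 = 0} := by
      rintro _ ⟨x, rfl⟩
      show (x : ℝ) + -x = 0
      ring
    have hfinj : Function.Injective (fun x : ℝ => ((x, -x) : SL × SL)) :=
      fun a b hab => congrArg Prod.fst hab
    have : Countable ℝ := by
      have := (hcnt.mono hrange).to_subtype
      exact Countable.of_equiv _ (Equiv.ofInjective _ hfinj).symm
    exact not_countable this
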